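/- Let n ≥ 2 and let C = (C_{j;i}) be a real n×n matrix. There exists a torsion-type tensor T = (T_{ab}^c) satisfying all n compatibility equations (Σ_{a<b, c} σ_{ab;i}^c(y)·T_{ab}^c = 2·Σ_j C_{j;i}·y_j for all y ∈ ℝⁿ and all i ∈ {1,…,n}) if and only if C_{n;i} = 0 for every i ∈ {1,…,n}. -/

import Mathlib

open Finset

/-- The last index `n` of `{1,…,n}`, realized as the final element of `Fin n`. -/
def lastIdx (n : ℕ) (hn : 1 ≤ n) : Fin n := ⟨n - 1, by omega⟩

/-- The coefficient `σ_{ab;i}^c(y) = (δᵢᶜyₐ + δᵢᵃy_c)δ_bⁿ + (δᵢᵇyₐ − δᵢᵃy_b)δ_cⁿ` of the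
torsion component `T_{ab}^c` in the `i`-th compatibility equation of a Randers metric. -/
noncomputable def sigma (n : ℕ) (hn : 1 ≤ n) (a b c i : Fin n) (y : Fin n → ℝ) : ℝ :=
  ((if i = c then (1 : ℝ) else 0) * y a + (if i = a then (1 : ℝ) else 0) * y c) *
      (if b = lastIdx n hn then (1 : ℝ) else 0) +
    ((if i = b then (1 : ℝ) else 0) * y a - (if i = a then (1 : ℝ) else 0) * y b) *
      (if c = lastIdx n hn then (1 : ℝ) else 0)

/-- A torsion-type tensor: a family `T_{ab}^c` of reals, skew-symmetric in the lower
indices. -/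
def IsSkew (n : ℕ) (T : Fin n → Fin n → Fin n → ℝ) : Prop :=
  ∀ a b c, T a b c = - T b a c

/-- The left-hand side `Σ_{a<b, c} σ_{ab;i}^c(y)·T_{ab}^c` of the `i`-th compatibility
equation. -/
noncomputable def compatLHS (n : ℕ) (hn : 1 ≤ n) (T : Fin n → Fin n → Fin n → ℝ)
    (i : Fin n) (y : Fin n → ℝ) : ℝ :=
  ∑ a : Fin n, ∑ b : Fin n, ∑ c : Fin n,
    if a < b then sigma n hn a b c i y * T a b c else 0

-- helpers
lemma lt_ne_last {n : ℕ} (hn : 1 ≤ n) {a b : Fin n} (h : a < b) : a ≠ lastIdx n hn := by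
  intro ha
  have hb := b.isLt
  have h' : a.1 < b.1 := h
  have : a.1 = n - 1 := by rw [ha]; rfl
  omega

lemma ne_last_iff {n : ℕ} (hn : 1 ≤ n) {a : Fin n} : a ≠ lastIdx n hn ↔ a < lastIdx n hn := by
  have ha := a.isLt
  constructor
  · intro h
    have : a.1 ≠ n - 1 := fun hh => h (Fin.ext hh)
    show a.1 < n - 1
    omega
  · intro h
    exact lt_ne_last hn h

lemma sum_ite_ne {n : ℕ} (m : Fin n) (f : Fin n → ℝ) :
    ∑ a, (if a ≠ m then f a else 0) = (∑ a, f a) - f m := by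
  have h1 : ∀ a : Fin n, (if a ≠ m then f a else 0) = f a - (if a = m then f a else 0) := by
    intro a; by_cases h : a = m <;> simp [h]
  simp only [h1, Finset.sum_sub_distrib, Finset.sum_ite_eq', mem_univ, if_pos]

noncomputable def Tdef (n : ℕ) (hn : 1 ≤ n) (C : Fin n → Fin n → ℝ) (a b c : Fin n) : ℝ :=
  (if b = lastIdx n hn then C a c else 0) - (if a = lastIdx n hn then C b c else 0) +
    (if a ≠ lastIdx n hn ∧ b ≠ lastIdx n hn ∧ c = lastIdx n hn then C a b - C b a else 0)

lemma Tdef_skew (n : ℕ) (hn : 1 ≤ n) (C : Fin n → Fin n → ℝ) :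
    ∀ a b c, Tdef n hn C a b c = - Tdef n hn C b a c := by
  intro a b c
  unfold Tdef
  by_cases ha : a = lastIdx n hn <;> by_cases hb : b = lastIdx n hn <;>
    simp [ha, hb] <;> split_ifs <;> first | ring | (subst ha; subst hb; ring)

noncomputable def Xd (n : ℕ) (hn : 1 ≤ n) (C : Fin n → Fin n → ℝ) (i : Fin n) (y : Fin n → ℝ)
    (a : Fin n) : ℝ :=
  y a * C a i + (if i = a then (1:ℝ) else 0) * (∑ c, C a c * y c)
    + ((if i = lastIdx n hn then (1:ℝ) else 0) * y a
        - (if i = a then (1:ℝ) else 0) * y (lastIdx n hn)) * C a (lastIdx n hn)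

lemma sumC_eval (n : ℕ) (hn : 1 ≤ n) (C : Fin n → Fin n → ℝ) (i a b : Fin n) (y : Fin n → ℝ)
    (ha : a ≠ lastIdx n hn) :
    ∑ c, sigma n hn a b c i y * Tdef n hn C a b c =
      if b = lastIdx n hn then Xd n hn C i y a
      else ((if i = b then (1:ℝ) else 0) * y a - (if i = a then (1:ℝ) else 0) * y b)
              * (C a b - C b a) := by
  set m := lastIdx n hn with hm
  by_cases hb : b = m
  · subst hb
    rw [if_pos rfl]
    have hT : ∀ c, Tdef n hn C a m c = C a c := by
      intro c; unfold Tdef; simp [ha, ← hm]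
    have hpt : ∀ c : Fin n, sigma n hn a m c i y * Tdef n hn C a m c =
        (if i = c then y a * C a c else 0)
        + (if i = a then (1:ℝ) else 0) * (C a c * y c)
        + (if c = m then ((if i = m then (1:ℝ) else 0) * y a
            - (if i = a then (1:ℝ) else 0) * y m) * C a c else 0) := by
      intro c
      rw [hT]
      unfold sigma
      rw [← hm, if_pos rfl]
      split_ifs <;> ring
    rw [Finset.sum_congr rfl (fun c _ => hpt c)]
    rw [Finset.sum_add_distrib, Finset.sum_add_distrib, ← Finset.mul_sum]
    rw [Finset.sum_ite_eq univ i (fun c => y a * C a c), Finset.sum_ite_eq' univ m]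
    simp [Xd, ← hm]
  · rw [if_neg hb]
    have hT : ∀ c, Tdef n hn C a b c = if c = m then C a b - C b a else 0 := by
      intro c; unfold Tdef; simp [ha, hb, ← hm]
    have hpt : ∀ c : Fin n, sigma n hn a b c i y * Tdef n hn C a b c =
        if c = m then ((if i = b then (1:ℝ) else 0) * y a
            - (if i = a then (1:ℝ) else 0) * y b) * (C a b - C b a) else 0 := by
      intro c
      rw [hT]
      unfold sigma
      rw [← hm, if_neg hb]
      split_ifs <;> ring
    rw [Finset.sum_congr rfl (fun c _ => hpt c), Finset.sum_ite_eq' univ m]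
    simp

lemma sum_gt_zero (n : ℕ) (hn : 1 ≤ n) (g : Fin n → ℝ) :
    (∑ b : Fin n, if lastIdx n hn < b ∧ b ≠ lastIdx n hn then g b else 0) = 0 := by
  apply Finset.sum_eq_zero
  intro b _
  rw [if_neg]
  rintro ⟨h1, -⟩
  have hb := b.isLt
  have : (n - 1 : ℕ) < (b : ℕ) := h1
  omega

lemma main_calc (n : ℕ) (hn : 1 ≤ n) (C : Fin n → Fin n → ℝ)
    (hC : ∀ j, C (lastIdx n hn) j = 0) (i : Fin n) (y : Fin n → ℝ) :
    compatLHS n hn (Tdef n hn C) i y = 2 * ∑ j, C j i * y j := by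
  -- Step 1 : evaluate the inner sum over c and split according to b
  have step1 : ∀ a b : Fin n,
      (∑ c, if a < b then sigma n hn a b c i y * Tdef n hn C a b c else 0)
        = (if b = lastIdx n hn then (if a ≠ lastIdx n hn then Xd n hn C i y a else 0) else 0)
          + ((if b = i then (if a < i ∧ i ≠ lastIdx n hn then y a * (C a i - C i a) else 0) else 0)
             + (if a = i then (if i < b ∧ b ≠ lastIdx n hn then -(y b * (C i b - C b i)) else 0)
                 else 0)) := by
    intro a b
    by_cases hab : a < b
    · have ha : a ≠ lastIdx n hn := lt_ne_last hn hab
      rw [Finset.sum_congr rfl (fun c _ => if_pos hab), sumC_eval n hn C i a b y ha]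
      by_cases hb : b = lastIdx n hn
      · subst hb
        rw [if_pos rfl, if_pos rfl, if_pos ha]
        have h2 : (if lastIdx n hn = i then
            (if a < i ∧ i ≠ lastIdx n hn then y a * (C a i - C i a) else 0) else 0) = 0 := by
          by_cases him : lastIdx n hn = i
          · rw [if_pos him, if_neg]; rintro ⟨-, h⟩; exact h him.symm
          · rw [if_neg him]
        have h3 : (if a = i then
            (if i < lastIdx n hn ∧ lastIdx n hn ≠ lastIdx n hn then
              -(y (lastIdx n hn) * (C i (lastIdx n hn) - C (lastIdx n hn) i)) else 0)
            else 0) = 0 := by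
          by_cases hai : a = i
          · rw [if_pos hai, if_neg]; rintro ⟨-, h⟩; exact h rfl
          · rw [if_neg hai]
        rw [h2, h3]; ring
      · rw [if_neg hb, if_neg hb]
        by_cases hbi : i = b <;> by_cases hai : i = a
        · exact absurd (lt_of_eq_of_lt hai (lt_of_lt_of_eq hab hbi.symm)) (lt_irrefl i)
        · rw [if_pos hbi, if_neg hai, if_pos hbi.symm, if_neg (fun h : a = i => hai h.symm),
            if_pos ⟨lt_of_lt_of_eq hab hbi.symm, fun h => hb (hbi.symm.trans h)⟩, hbi]
          ring
        · rw [if_neg hbi, if_pos hai, if_neg (fun h : b = i => hbi h.symm),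
            if_pos hai.symm, if_pos ⟨lt_of_eq_of_lt hai hab, hb⟩, hai]
          ring
        · rw [if_neg hbi, if_neg hai, if_neg (fun h : b = i => hbi h.symm),
            if_neg (fun h : a = i => hai h.symm)]
          ring
    · rw [Finset.sum_congr rfl (fun c _ => if_neg hab), Finset.sum_const_zero]
      have h1 : (if b = lastIdx n hn then
          (if a ≠ lastIdx n hn then Xd n hn C i y a else 0) else 0) = 0 := by
        by_cases hb : b = lastIdx n hn
        · rw [if_pos hb, if_neg]
          intro h
          exact hab (hb ▸ (ne_last_iff hn).mp h)
        · rw [if_neg hb]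
      have h2 : (if b = i then
          (if a < i ∧ i ≠ lastIdx n hn then y a * (C a i - C i a) else 0) else 0) = 0 := by
        by_cases hbi : b = i
        · rw [if_pos hbi, if_neg]; rintro ⟨h, -⟩; exact hab (hbi ▸ h)
        · rw [if_neg hbi]
      have h3 : (if a = i then
          (if i < b ∧ b ≠ lastIdx n hn then -(y b * (C i b - C b i)) else 0) else 0) = 0 := by
        by_cases hai : a = i
        · rw [if_pos hai, if_neg]; rintro ⟨h, -⟩; exact hab (hai ▸ h)
        · rw [if_neg hai]
      rw [h1, h2, h3]; ring
  -- Step 2 : sum over b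
  have step2 : ∀ a : Fin n,
      (∑ b, ∑ c, if a < b then sigma n hn a b c i y * Tdef n hn C a b c else 0)
        = (if a ≠ lastIdx n hn then Xd n hn C i y a else 0)
          + ((if a < i ∧ i ≠ lastIdx n hn then y a * (C a i - C i a) else 0)
             + (if a = i then
                 (∑ b, if i < b ∧ b ≠ lastIdx n hn then -(y b * (C i b - C b i)) else 0)
                 else 0)) := by
    intro a
    rw [Finset.sum_congr rfl (fun b _ => step1 a b)]
    rw [Finset.sum_add_distrib, Finset.sum_add_distrib]
    rw [Finset.sum_ite_eq' univ (lastIdx n hn)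
      (fun _ => if a ≠ lastIdx n hn then Xd n hn C i y a else 0)]
    rw [Finset.sum_ite_eq' univ i
      (fun _ => if a < i ∧ i ≠ lastIdx n hn then y a * (C a i - C i a) else 0)]
    have h3 : (∑ b, if a = i then
        (if i < b ∧ b ≠ lastIdx n hn then -(y b * (C i b - C b i)) else 0) else 0)
        = if a = i then
            (∑ b, if i < b ∧ b ≠ lastIdx n hn then -(y b * (C i b - C b i)) else 0) else 0 := by
      by_cases hai : a = i <;> simp [hai]
    rw [h3]
    simp
  -- Step 3 : sum over a
  unfold compatLHS
  rw [Finset.sum_congr rfl (fun a _ => step2 a)]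
  rw [Finset.sum_add_distrib, Finset.sum_add_distrib]
  rw [Finset.sum_ite_eq' univ i
    (fun _ => ∑ b, if i < b ∧ b ≠ lastIdx n hn then -(y b * (C i b - C b i)) else 0)]
  simp only [mem_univ, if_pos]
  -- Evaluate S1
  have hXm : Xd n hn C i y (lastIdx n hn) = 0 := by
    unfold Xd
    rw [hC i]
    have : (∑ c, C (lastIdx n hn) c * y c) = 0 :=
      Finset.sum_eq_zero (fun c _ => by rw [hC c, zero_mul])
    rw [this, hC (lastIdx n hn)]
    ring
  have hS1 : (∑ a, if a ≠ lastIdx n hn then Xd n hn C i y a else 0)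
      = (∑ a, y a * C a i) + ((∑ c, C i c * y c) - y (lastIdx n hn) * C i (lastIdx n hn))
        + (if i = lastIdx n hn then (1:ℝ) else 0) * (∑ a, y a * C a (lastIdx n hn)) := by
    rw [sum_ite_ne (lastIdx n hn) (Xd n hn C i y), hXm, sub_zero]
    have hpt : ∀ a : Fin n, Xd n hn C i y a =
        y a * C a i
        + (if i = a then ((∑ c, C a c * y c) - y (lastIdx n hn) * C a (lastIdx n hn)) else 0)
        + (if i = lastIdx n hn then (1:ℝ) else 0) * (y a * C a (lastIdx n hn)) := by
      intro a
      unfold Xd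
      split_ifs <;> ring
    rw [Finset.sum_congr rfl (fun a _ => hpt a)]
    rw [Finset.sum_add_distrib, Finset.sum_add_distrib, ← Finset.mul_sum]
    rw [Finset.sum_ite_eq univ i
      (fun a => (∑ c, C a c * y c) - y (lastIdx n hn) * C a (lastIdx n hn))]
    simp
  rw [hS1]
  by_cases hi : i = lastIdx n hn
  · -- case i = m
    subst hi
    rw [if_pos rfl]
    have hz2 : (∑ a, if a < lastIdx n hn ∧ lastIdx n hn ≠ lastIdx n hn then
        y a * (C a (lastIdx n hn) - C (lastIdx n hn) a) else 0) = 0 :=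
      Finset.sum_eq_zero (fun a _ => by rw [if_neg]; rintro ⟨-, h⟩; exact h rfl)
    have hz3 : (∑ b, if lastIdx n hn < b ∧ b ≠ lastIdx n hn then
        -(y b * (C (lastIdx n hn) b - C b (lastIdx n hn))) else 0) = 0 :=
      sum_gt_zero n hn _
    rw [hz2, hz3]
    have hc1 : (∑ c, C (lastIdx n hn) c * y c) = 0 :=
      Finset.sum_eq_zero (fun c _ => by rw [hC c, zero_mul])
    rw [hc1, hC (lastIdx n hn)]
    have heq : (∑ a, y a * C a (lastIdx n hn)) = ∑ j, C j (lastIdx n hn) * y j :=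
      Finset.sum_congr rfl (fun a _ => mul_comm _ _)
    rw [heq]
    ring
  · -- case i ≠ m
    rw [if_neg hi]
    -- combine S2 and S3
    have hcomb : (∑ a, if a < i ∧ i ≠ lastIdx n hn then y a * (C a i - C i a) else 0)
        + (∑ b, if i < b ∧ b ≠ lastIdx n hn then -(y b * (C i b - C b i)) else 0)
        = (∑ a, y a * (C a i - C i a)) - y (lastIdx n hn)
            * (C (lastIdx n hn) i - C i (lastIdx n hn)) := by
      rw [← Finset.sum_add_distrib]
      have hpt : ∀ a : Fin n,
          (if a < i ∧ i ≠ lastIdx n hn then y a * (C a i - C i a) else 0)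
          + (if i < a ∧ a ≠ lastIdx n hn then -(y a * (C i a - C a i)) else 0)
          = if a ≠ lastIdx n hn then y a * (C a i - C i a) else 0 := by
        intro a
        have hiv : (i : ℕ) ≠ n - 1 := fun h => hi (Fin.ext h)
        have hin := i.isLt
        have han := a.isLt
        rcases lt_trichotomy a i with h | h | h
        · have ham : a ≠ lastIdx n hn := by
            intro hh
            have : (a : ℕ) = n - 1 := by rw [hh]; rfl
            have : (a : ℕ) < (i : ℕ) := h
            omega
          rw [if_pos ⟨h, hi⟩, if_neg (fun hh => absurd hh.1 (not_lt.mpr h.le)), if_pos ham]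
          ring
        · subst h
          rw [if_neg (fun hh => absurd hh.1 (lt_irrefl a)),
            if_neg (fun hh => absurd hh.1 (lt_irrefl a)), if_pos hi]
          ring
        · by_cases ham : a = lastIdx n hn
          · rw [if_neg (fun hh => absurd hh.1 (not_lt.mpr h.le)),
              if_neg (fun hh => absurd ham hh.2), if_neg (fun hh => hh ham)]
            ring
          · rw [if_neg (fun hh => absurd hh.1 (not_lt.mpr h.le)), if_pos ⟨h, ham⟩,
              if_pos ham]
            ring
      rw [Finset.sum_congr rfl (fun a _ => hpt a), sum_ite_ne]
    rw [add_assoc, hcomb, hC i]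
    have e1 : (∑ a, y a * C a i) = ∑ j, C j i * y j :=
      Finset.sum_congr rfl (fun a _ => mul_comm _ _)
    have e2 : (∑ a : Fin n, y a * (C a i - C i a))
        = (∑ j, C j i * y j) - (∑ c, C i c * y c) := by
      rw [← Finset.sum_sub_distrib]
      exact Finset.sum_congr rfl (fun a _ => by ring)
    rw [e1, e2]
    ring

/-- there exists a torsion-type tensor `T` satisfying all `n`
compatibility equations if and only if `C_{n;i} = 0` for every `i`. -/
theorem compatibility_solvability (n : ℕ) (hn : 2 ≤ n) (C : Fin n → Fin n → ℝ) :
    (∃ T : Fin n → Fin n → Fin n → ℝ, IsSkew n T ∧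
        ∀ i : Fin n, ∀ y : Fin n → ℝ,
          compatLHS n (by omega) T i y = 2 * ∑ j : Fin n, C j i * y j) ↔
      ∀ i : Fin n, C (lastIdx n (by omega)) i = 0 := by
  have h1 : 1 ≤ n := by omega
  constructor
  · rintro ⟨T, hskew, heq⟩ i
    set e : Fin n → ℝ := fun j => if j = lastIdx n h1 then (1:ℝ) else 0 with he
    have h2 : compatLHS n h1 T i e = 2 * ∑ j, C j i * e j := heq i e
    have hz : compatLHS n h1 T i e = 0 := by
      unfold compatLHS
      apply Finset.sum_eq_zero; intro a _
      apply Finset.sum_eq_zero; intro b _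
      apply Finset.sum_eq_zero; intro c _
      by_cases hab : a < b
      · rw [if_pos hab]
        have ha : a ≠ lastIdx n h1 := lt_ne_last h1 hab
        have hz0 : sigma n h1 a b c i e = 0 := by
          unfold sigma
          rw [he]
          simp only
          rw [if_neg ha]
          ring
        rw [hz0, zero_mul]
      · rw [if_neg hab]
    rw [hz] at h2
    have hsum : (∑ j, C j i * e j) = C (lastIdx n h1) i := by
      have hpt : ∀ j : Fin n, C j i * e j = if j = lastIdx n h1 then C j i else 0 := by
        intro j
        rw [he]
        simp only
        split_ifs <;> ring
      rw [Finset.sum_congr rfl (fun j _ => hpt j), Finset.sum_ite_eq' univ (lastIdx n h1)]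
      simp
    rw [hsum] at h2
    have : C (lastIdx n h1) i = 0 := by linarith
    exact this
  · intro hC
    refine ⟨Tdef n h1 C, Tdef_skew n h1 C, fun i y => ?_⟩
    exact main_calc n h1 C hC i y
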